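/- With the notation of the shifted CR iteration (Ŵ_{ℓ+1} = −Ŵ_ℓẐ_ℓ^{-1}Ŵ_ℓ, Ẑ_{ℓ+1} = Ẑ_ℓ + 2Ŵ_{ℓ+1}), if Ŵ₀ ≤ 0 entrywise, Ẑ₀ is a nonsingular M-matrix, and the scalar sequences satisfy ω₀ = σ−1 < 0, ζ₀ = 2−σ > 0 with 0 < σ < 1 and Ẑ_ℓ u = ζ_ℓ u, Ŵ_ℓ u = ω_ℓ u for u > 0, then for all ℓ ≥ 1: Ŵ_ℓ ≤ 0 and Ẑ_ℓ is a nonsingular M-matrix. -/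

import Mathlib

open Matrix

noncomputable def toC {n : ℕ} (A : Matrix (Fin n) (Fin n) ℝ) : Matrix (Fin n) (Fin n) ℂ :=
  A.map (fun x => (x : ℂ))

def IsEig {n : ℕ} (A : Matrix (Fin n) (Fin n) ℂ) (μ : ℂ) : Prop :=
  ∃ v : Fin n → ℂ, v ≠ 0 ∧ A *ᵥ v = μ • v

noncomputable def specRad {n : ℕ} (B : Matrix (Fin n) (Fin n) ℝ) : ℝ :=
  sSup {r : ℝ | ∃ μ : ℂ, IsEig (toC B) μ ∧ r = ‖μ‖}

def IsMmat {n : ℕ} (A : Matrix (Fin n) (Fin n) ℝ) : Prop :=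
  ∃ (α : ℝ) (B : Matrix (Fin n) (Fin n) ℝ),
    (∀ i j, 0 ≤ B i j) ∧ specRad B ≤ α ∧ A = α • (1 : Matrix (Fin n) (Fin n) ℝ) - B

/-- A Z-matrix with positive eigenvector and positive eigenvalue is monotone. -/
lemma zmat_mono {n : ℕ} (A : Matrix (Fin n) (Fin n) ℝ) (u : Fin n → ℝ) (s : ℝ)
    (hu : ∀ i, 0 < u i) (hs : 0 < s) (hoff : ∀ i j, i ≠ j → A i j ≤ 0)
    (heig : A *ᵥ u = s • u) (x : Fin n → ℝ) (hx : ∀ i, 0 ≤ (A *ᵥ x) i) :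
    ∀ i, 0 ≤ x i := by
  intro i
  have hne : (Finset.univ : Finset (Fin n)).Nonempty := ⟨i, Finset.mem_univ i⟩
  obtain ⟨i₀, -, hmin⟩ := Finset.exists_min_image Finset.univ (fun j => x j / u j) hne
  set c := x i₀ / u i₀ with hc
  have hcle : ∀ j, c * u j ≤ x j := by
    intro j
    have := hmin j (Finset.mem_univ j)
    calc c * u j ≤ (x j / u j) * u j := mul_le_mul_of_nonneg_right this (hu j).le
      _ = x j := div_mul_cancel₀ _ (hu j).ne'
  have hxi₀ : x i₀ = c * u i₀ := by
    rw [hc, div_mul_cancel₀ _ (hu i₀).ne']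
  have h0c : 0 ≤ c := by
    by_contra hcn
    push_neg at hcn
    have h1 : (A *ᵥ x) i₀ ≤ c * s * u i₀ := by
      have hterm : ∀ j ∈ Finset.univ, A i₀ j * x j ≤ A i₀ j * (c * u j) := by
        intro j _
        rcases eq_or_ne j i₀ with rfl | hji
        · rw [hxi₀]
        · exact mul_le_mul_of_nonpos_left (hcle j) (hoff i₀ j (Ne.symm hji))
      calc (A *ᵥ x) i₀ = ∑ j, A i₀ j * x j := rfl
        _ ≤ ∑ j, A i₀ j * (c * u j) := Finset.sum_le_sum hterm
        _ = c * ∑ j, A i₀ j * u j := by rw [Finset.mul_sum]; congr 1; ext j; ring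
        _ = c * (A *ᵥ u) i₀ := rfl
        _ = c * (s * u i₀) := by rw [heig]; rfl
        _ = c * s * u i₀ := by ring
    have h2 : c * s * u i₀ < 0 := mul_neg_of_neg_of_pos (mul_neg_of_neg_of_pos hcn hs) (hu i₀)
    exact absurd (le_trans (hx i₀) h1) (not_le.mpr h2)
  have := hcle i
  nlinarith [mul_nonneg h0c (hu i).le]

lemma zmat_isUnit {n : ℕ} (A : Matrix (Fin n) (Fin n) ℝ) (u : Fin n → ℝ) (s : ℝ)
    (hu : ∀ i, 0 < u i) (hs : 0 < s) (hoff : ∀ i j, i ≠ j → A i j ≤ 0)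
    (heig : A *ᵥ u = s • u) : IsUnit A := by
  rw [Matrix.isUnit_iff_isUnit_det, isUnit_iff_ne_zero]
  intro hdet
  obtain ⟨v, hv0, hv⟩ := (Matrix.exists_mulVec_eq_zero_iff).mpr hdet
  apply hv0
  funext i
  have h1 : 0 ≤ v i := zmat_mono A u s hu hs hoff heig v (fun j => by rw [hv]; exact le_refl 0) i
  have h2 : 0 ≤ -v i := by
    refine zmat_mono A u s hu hs hoff heig (-v) (fun j => ?_) i
    rw [Matrix.mulVec_neg, hv]
    simp
  simp only [Pi.zero_apply]
  linarith

lemma zmat_inv_nonneg {n : ℕ} (A : Matrix (Fin n) (Fin n) ℝ) (u : Fin n → ℝ) (s : ℝ)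
    (hu : ∀ i, 0 < u i) (hs : 0 < s) (hoff : ∀ i j, i ≠ j → A i j ≤ 0)
    (heig : A *ᵥ u = s • u) : ∀ i j, 0 ≤ A⁻¹ i j := by
  intro i j
  have hdet : IsUnit A.det := (Matrix.isUnit_iff_isUnit_det A).mp
    (zmat_isUnit A u s hu hs hoff heig)
  have key : A *ᵥ (A⁻¹ *ᵥ Pi.single j 1) = Pi.single j 1 := by
    rw [Matrix.mulVec_mulVec, Matrix.mul_nonsing_inv A hdet, Matrix.one_mulVec]
  have h1 : ∀ k, 0 ≤ (A⁻¹ *ᵥ Pi.single j 1) k := by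
    refine zmat_mono A u s hu hs hoff heig _ (fun k => ?_)
    rw [key]
    rcases eq_or_ne k j with rfl | h
    · simp
    · simp [Pi.single_apply, h]
  have heq : (A⁻¹ *ᵥ Pi.single j 1) i = A⁻¹ i j := by
    simp [Matrix.mulVec_single]
  rw [← heq]; exact h1 i

lemma eig_bound {n : ℕ} (B : Matrix (Fin n) (Fin n) ℝ) (u : Fin n → ℝ) (r : ℝ)
    (hB : ∀ i j, 0 ≤ B i j) (hu : ∀ i, 0 < u i) (heig : B *ᵥ u = r • u)
    (μ : ℂ) (hμ : IsEig (toC B) μ) : ‖μ‖ ≤ r := by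
  obtain ⟨v, hv0, hv⟩ := hμ
  obtain ⟨j₀, hj₀⟩ : ∃ j, v j ≠ 0 := by
    by_contra h; push_neg at h; exact hv0 (funext fun j => h j)
  have hne : (Finset.univ : Finset (Fin n)).Nonempty := ⟨j₀, Finset.mem_univ j₀⟩
  obtain ⟨i₀, -, hmax⟩ := Finset.exists_max_image Finset.univ
    (fun j => ‖v j‖ / u j) hne
  set c := ‖v i₀‖ / u i₀ with hc
  have hcge : ∀ j, ‖v j‖ ≤ c * u j := by
    intro j
    have := hmax j (Finset.mem_univ j)
    calc ‖v j‖ = (‖v j‖ / u j) * u j :=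
          (div_mul_cancel₀ _ (hu j).ne').symm
      _ ≤ c * u j := mul_le_mul_of_nonneg_right this (hu j).le
  have hcpos : 0 < c := by
    have h1 : 0 < ‖v j₀‖ := by
      simpa using (norm_pos_iff.mpr hj₀)
    have := hmax j₀ (Finset.mem_univ j₀)
    have h2 : 0 < ‖v j₀‖ / u j₀ := div_pos h1 (hu j₀)
    linarith
  have hvi₀ : ‖v i₀‖ = c * u i₀ := by
    rw [hc, div_mul_cancel₀ _ (hu i₀).ne']
  have hvi₀pos : 0 < ‖v i₀‖ := by
    rw [hvi₀]; exact mul_pos hcpos (hu i₀)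
  have key : ‖μ‖ * ‖v i₀‖ ≤ r * ‖v i₀‖ := by
    have h1 : (toC B *ᵥ v) i₀ = μ * v i₀ := by rw [hv]; rfl
    calc ‖μ‖ * ‖v i₀‖ = ‖μ * v i₀‖ :=
          (norm_mul _ _).symm
      _ = ‖(toC B *ᵥ v) i₀‖ := by rw [h1]
      _ = ‖∑ j, (B i₀ j : ℂ) * v j‖ := rfl
      _ ≤ ∑ j, ‖(B i₀ j : ℂ) * v j‖ := norm_sum_le _ _
      _ = ∑ j, B i₀ j * ‖v j‖ := by
          congr 1; ext j
          rw [norm_mul, Complex.norm_real, Real.norm_eq_abs, abs_of_nonneg (hB i₀ j)]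
      _ ≤ ∑ j, B i₀ j * (c * u j) := by
          refine Finset.sum_le_sum fun j _ => ?_
          exact mul_le_mul_of_nonneg_left (hcge j) (hB i₀ j)
      _ = c * ∑ j, B i₀ j * u j := by rw [Finset.mul_sum]; congr 1; ext j; ring
      _ = c * (B *ᵥ u) i₀ := rfl
      _ = c * (r * u i₀) := by rw [heig]; rfl
      _ = r * (c * u i₀) := by ring
      _ = r * ‖v i₀‖ := by rw [hvi₀]
  exact le_of_mul_le_mul_right (by linarith [key]) hvi₀pos

lemma specRad_le {n : ℕ} (B : Matrix (Fin n) (Fin n) ℝ) (u : Fin n → ℝ) (r : ℝ)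
    (hB : ∀ i j, 0 ≤ B i j) (hu : ∀ i, 0 < u i) (heig : B *ᵥ u = r • u)
    (hr : 0 ≤ r) : specRad B ≤ r := by
  refine Real.sSup_le ?_ hr
  rintro x ⟨μ, hμ, rfl⟩
  exact eig_bound B u r hB hu heig μ hμ

lemma zmat_isMmat {n : ℕ} (A : Matrix (Fin n) (Fin n) ℝ) (u : Fin n → ℝ) (s : ℝ)
    (hu : ∀ i, 0 < u i) (hs : 0 ≤ s) (hoff : ∀ i j, i ≠ j → A i j ≤ 0)
    (heig : A *ᵥ u = s • u) : IsMmat A := by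
  rcases Nat.eq_zero_or_pos n with rfl | hn
  · refine ⟨0, 0, fun i j => le_refl 0, ?_, ?_⟩
    · have hempty : {r : ℝ | ∃ μ : ℂ, IsEig (toC (0 : Matrix (Fin 0) (Fin 0) ℝ)) μ ∧
          r = ‖μ‖} = ∅ := by
        ext r
        simp only [Set.mem_setOf_eq, Set.mem_empty_iff_false, iff_false]
        rintro ⟨μ, ⟨v, hv0, -⟩, -⟩
        exact hv0 (funext fun i => i.elim0)
      rw [specRad, hempty, Real.sSup_empty]
    · ext i j; exact i.elim0
  · have hne : (Finset.univ : Finset (Fin n)).Nonempty :=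
      ⟨⟨0, hn⟩, Finset.mem_univ _⟩
    set α : ℝ := max (Finset.univ.sup' hne fun i => A i i) s with hα
    have hαs : s ≤ α := le_max_right _ _
    have hαd : ∀ i, A i i ≤ α :=
      fun i => le_trans (Finset.le_sup' (fun i => A i i) (Finset.mem_univ i)) (le_max_left _ _)
    set B : Matrix (Fin n) (Fin n) ℝ := α • (1 : Matrix (Fin n) (Fin n) ℝ) - A with hB
    have hBnn : ∀ i j, 0 ≤ B i j := by
      intro i j
      rcases eq_or_ne i j with rfl | h
      · simp only [hB, Matrix.sub_apply, Matrix.smul_apply, Matrix.one_apply_eq, smul_eq_mul,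
          mul_one]
        linarith [hαd i]
      · simp only [hB, Matrix.sub_apply, Matrix.smul_apply, Matrix.one_apply_ne h, smul_eq_mul,
          mul_zero, zero_sub]
        linarith [hoff i j h]
    have hBeig : B *ᵥ u = (α - s) • u := by
      rw [hB, Matrix.sub_mulVec, Matrix.smul_mulVec, Matrix.one_mulVec, heig]
      ext i
      simp only [Pi.sub_apply, Pi.smul_apply, smul_eq_mul]
      ring
    refine ⟨α, B, hBnn, ?_, by rw [hB]; abel⟩
    calc specRad B ≤ α - s := specRad_le B u (α - s) hBnn hu hBeig (by linarith)
      _ ≤ α := by linarith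

lemma mul_entry_nonneg {n : ℕ} (M N : Matrix (Fin n) (Fin n) ℝ)
    (hM : ∀ i j, 0 ≤ M i j) (hN : ∀ i j, 0 ≤ N i j) : ∀ i j, 0 ≤ (M * N) i j := by
  intro i j
  rw [Matrix.mul_apply]
  exact Finset.sum_nonneg fun k _ => mul_nonneg (hM i k) (hN k j)

/-- If Ŵ₀ ≤ 0, Ẑ₀ is a nonsingular M-matrix, 0 < σ < 1 and Ŵ_ℓ u = ω_ℓ u,
Ẑ_ℓ u = ζ_ℓ u with the scalar recursions, then Ŵ_ℓ ≤ 0 and Ẑ_ℓ is a nonsingular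
M-matrix for all ℓ ≥ 1. -/
theorem stmt16 {n : ℕ} (u : Fin n → ℝ) (hu : ∀ i, 0 < u i)
    (σ : ℝ) (hσ0 : 0 < σ) (hσ1 : σ < 1)
    (W Z : ℕ → Matrix (Fin n) (Fin n) ℝ) (ω ζ : ℕ → ℝ)
    (hWrec : ∀ ℓ, W (ℓ+1) = -(W ℓ * (Z ℓ)⁻¹ * W ℓ))
    (hZrec : ∀ ℓ, Z (ℓ+1) = Z ℓ + (2 : ℝ) • W (ℓ+1))
    (hW0 : ∀ i j, W 0 i j ≤ 0) (hZ0M : IsMmat (Z 0)) (hZ0inv : IsUnit (Z 0))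
    (hω0 : ω 0 = σ - 1) (hζ0 : ζ 0 = 2 - σ)
    (hωrec : ∀ ℓ, ω (ℓ+1) = -(ω ℓ)^2 / ζ ℓ)
    (hζrec : ∀ ℓ, ζ (ℓ+1) = ζ ℓ + 2 * ω (ℓ+1))
    (heig : ∀ ℓ, W ℓ *ᵥ u = ω ℓ • u ∧ Z ℓ *ᵥ u = ζ ℓ • u) :
    ∀ ℓ, 1 ≤ ℓ → (∀ i j, W ℓ i j ≤ 0) ∧ IsMmat (Z ℓ) ∧ IsUnit (Z ℓ) := by
  -- scalar invariant
  have hscal : ∀ ℓ, 0 < ζ ℓ ∧ ω ℓ ≤ 0 ∧ -2 * ω ℓ < ζ ℓ := by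
    intro ℓ
    induction ℓ with
    | zero => refine ⟨by rw [hζ0]; linarith, by rw [hω0]; linarith, by rw [hω0, hζ0]; linarith⟩
    | succ m ih =>
      obtain ⟨hζm, hωm, hlt⟩ := ih
      have h4 : 4 * (ω m)^2 < (ζ m)^2 := by nlinarith
      have hω' : ω (m+1) = -(ω m)^2 / ζ m := hωrec m
      have hζ' : ζ (m+1) = ζ m + 2 * (-(ω m)^2 / ζ m) := by rw [hζrec m, hω' ]
      have hval : ζ m + 2 * (-(ω m)^2 / ζ m) = (ζ m ^ 2 - 2 * (ω m)^2) / ζ m := by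
        field_simp; ring
      constructor
      · rw [hζ', hval]
        apply div_pos (by nlinarith) hζm
      constructor
      · rw [hω']
        apply div_nonpos_of_nonpos_of_nonneg
        · nlinarith
        · linarith
      · rw [hω', hζ', hval]
        have hdiff : (ζ m ^ 2 - 2 * (ω m)^2) / ζ m - (-2 * (-(ω m)^2 / ζ m))
            = (ζ m ^ 2 - 4 * (ω m)^2) / ζ m := by field_simp; ring
        have hp : 0 < (ζ m ^ 2 - 4 * (ω m)^2) / ζ m := div_pos (by nlinarith) hζm
        linarith
  -- matrix invariant
  have hZ0off : ∀ i j, i ≠ j → Z 0 i j ≤ 0 := by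
    obtain ⟨α, B, hBnn, -, hZ0eq⟩ := hZ0M
    intro i j hij
    rw [hZ0eq]
    simp only [Matrix.sub_apply, Matrix.smul_apply, Matrix.one_apply_ne hij, smul_eq_mul,
      mul_zero, zero_sub]
    linarith [hBnn i j]
  have hmat : ∀ ℓ, (∀ i j, W ℓ i j ≤ 0) ∧ (∀ i j, i ≠ j → Z ℓ i j ≤ 0) := by
    intro ℓ
    induction ℓ with
    | zero => exact ⟨hW0, hZ0off⟩
    | succ m ih =>
      obtain ⟨hWm, hZm⟩ := ih
      obtain ⟨hζm, -, -⟩ := hscal m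
      have hZinv : ∀ i j, 0 ≤ (Z m)⁻¹ i j :=
        zmat_inv_nonneg (Z m) u (ζ m) hu hζm hZm (heig m).2
      have hWm' : ∀ i j, 0 ≤ (-W m) i j := fun i j => by
        simp only [Matrix.neg_apply]; linarith [hWm i j]
      have hprod : ∀ i j, 0 ≤ (W m * (Z m)⁻¹ * W m) i j := by
        have h1 : W m * (Z m)⁻¹ * W m = (-W m) * (Z m)⁻¹ * (-W m) := by
          rw [Matrix.neg_mul, Matrix.neg_mul, Matrix.mul_neg, neg_neg]
        intro i j
        rw [h1]
        exact mul_entry_nonneg _ _ (mul_entry_nonneg _ _ hWm' hZinv) hWm' i j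
      have hW' : ∀ i j, W (m+1) i j ≤ 0 := by
        intro i j
        rw [hWrec m]
        simp only [Matrix.neg_apply]
        linarith [hprod i j]
      refine ⟨hW', fun i j hij => ?_⟩
      rw [hZrec m]
      simp only [Matrix.add_apply, Matrix.smul_apply, smul_eq_mul]
      have := hW' i j
      have := hZm i j hij
      linarith
  intro ℓ _
  obtain ⟨hζℓ, -, -⟩ := hscal ℓ
  obtain ⟨hWℓ, hZℓ⟩ := hmat ℓ
  exact ⟨hWℓ, zmat_isMmat (Z ℓ) u (ζ ℓ) hu hζℓ.le hZℓ (heig ℓ).2,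
    zmat_isUnit (Z ℓ) u (ζ ℓ) hu hζℓ hZℓ (heig ℓ).2⟩
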